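/- arXiv:1810.08176 — 3 statements merged into one kernel-verified Lean document; each statement's English description precedes it below -/
import Mathlib

section
/- Let (C, d, U, D₁, D₂) be a Floer datum over a field Λ, with Ĉ, Č, C̄ and the maps i, j, p as defined in the context. Then: (1) ď ∘ i = 0, so i is a chain map from (C̄, 0) to (Č, ď); (2) j ∘ ď = d̂ ∘ j, so j is a chain map; (3) p ∘ d̂ = 0, so p is a chain map from (Ĉ, d̂) to (C̄, 0); (4) i commutes with the x-actions: i(x·z) = X̌(i(z)) for all z ∈ C̄, and p does as well: p(X̂(w)) = x·p(w) for all w ∈ Ĉ; (5) j commutes with the x-actions up to the chain homotopy h : Č → Ĉ given by h(α, Σ_{i=−∞}^{−1} a_i x^i) := (0, −a_{−1}), i.e., j ∘ X̌ − X̂ ∘ j = d̂ ∘ h + h ∘ ď. -/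
noncomputable section

variable (Λ : Type*) (V : Type*) [Field Λ] [AddCommGroup V] [Module Λ V]

/-- A Floer datum over the field `Λ`. -/
structure FloerDatum where
  gr : ZMod 8 → Submodule Λ V
  internal : DirectSum.IsInternal gr
  d : V →ₗ[Λ] V
  U : V →ₗ[Λ] V
  D₁ : V →ₗ[Λ] Λ
  D₂ : Λ →ₗ[Λ] V
  d_mem : ∀ (i : ZMod 8), ∀ v ∈ gr i, d v ∈ gr (i - 1)
  U_mem : ∀ (i : ZMod 8), ∀ v ∈ gr i, U v ∈ gr (i - 4)
  D₁_vanish : ∀ (i : ZMod 8), i ≠ 1 → ∀ v ∈ gr i, D₁ v = 0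
  D₂_mem : ∀ a : Λ, D₂ a ∈ gr 4
  d_d : d ∘ₗ d = 0
  D₁_d : D₁ ∘ₗ d = 0
  d_D₂ : d ∘ₗ D₂ = 0
  U_rel : U ∘ₗ d - d ∘ₗ U + D₂ ∘ₗ D₁ = 0

variable {Λ V}
variable {W : Type*} [AddCommGroup W] [Module Λ W]
variable {M : Type*} [AddCommGroup M] [Module Λ M]

/-- `p = Σ aᵢ xⁱ ↦ Σ f i aᵢ`, as a linear map on polynomials. -/
def polySum (f : ℕ → (Λ →ₗ[Λ] W)) : Polynomial Λ →ₗ[Λ] W where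
  toFun p := p.sum fun i a => f i a
  map_add' p q :=
    Polynomial.sum_add_index p q _ (fun i => map_zero (f i)) (fun i b c => map_add (f i) b c)
  map_smul' a p := by
    show (a • p).sum (fun i b => f i b) = a • p.sum fun i b => f i b
    rw [Polynomial.sum_smul_index p a _ (fun i => map_zero (f i)),
      Polynomial.sum, Polynomial.sum, Finset.smul_sum]
    exact Finset.sum_congr rfl fun n _ => by rw [← smul_eq_mul, map_smul]

/-- The differential `d̂` on `Ĉ = C ⊕ Λ[x]`. -/
def hatd (F : FloerDatum Λ V) : (V × Polynomial Λ) →ₗ[Λ] (V × Polynomial Λ) :=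
  ((F.d ∘ₗ LinearMap.fst Λ V (Polynomial Λ))
    - (polySum fun i => (F.U ^ i) ∘ₗ F.D₂) ∘ₗ LinearMap.snd Λ V (Polynomial Λ)).prod 0

/-- The map `X̂(α, p) = (U α, D₁ α + x·p)` on `Ĉ`. -/
def hatX (F : FloerDatum Λ V) : (V × Polynomial Λ) →ₗ[Λ] (V × Polynomial Λ) :=
  (F.U ∘ₗ LinearMap.fst Λ V (Polynomial Λ)).prod
    ((Algebra.linearMap Λ (Polynomial Λ)) ∘ₗ F.D₁ ∘ₗ LinearMap.fst Λ V (Polynomial Λ)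
      + (LinearMap.mulLeft Λ (Polynomial.X : Polynomial Λ)) ∘ₗ LinearMap.snd Λ V (Polynomial Λ))

/-- Package a family of `Λ`-linear coefficient functionals into a linear map to power series.
We use `PowerSeries Λ` (in the variable `x⁻¹`) as a model for `x⁻¹Λ[[x⁻¹]]`: a power series `q`
represents the series `Σ_{n≥0} (coeff n q) x^{-(n+1)}`. -/
def toPS (c : ℕ → (M →ₗ[Λ] Λ)) : M →ₗ[Λ] PowerSeries Λ where
  toFun m := PowerSeries.mk fun n => c n m
  map_add' x y := by
    ext n
    simp [PowerSeries.coeff_mk]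
  map_smul' a x := by
    ext n
    simp [PowerSeries.coeff_mk]

/-- The differential `ď` on `Č = C ⊕ x⁻¹Λ[[x⁻¹]]`. -/
def checkd (F : FloerDatum Λ V) : (V × PowerSeries Λ) →ₗ[Λ] (V × PowerSeries Λ) :=
  (F.d ∘ₗ LinearMap.fst Λ V (PowerSeries Λ)).prod
    ((toPS fun n => F.D₁ ∘ₗ (F.U ^ n)) ∘ₗ LinearMap.fst Λ V (PowerSeries Λ))

/-- The map `X̌` on `Č`. -/
def checkX (F : FloerDatum Λ V) : (V × PowerSeries Λ) →ₗ[Λ] (V × PowerSeries Λ) :=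
  (F.U ∘ₗ LinearMap.fst Λ V (PowerSeries Λ)
      + F.D₂ ∘ₗ (PowerSeries.coeff (R := Λ) 0) ∘ₗ LinearMap.snd Λ V (PowerSeries Λ)).prod
    ((toPS fun n => PowerSeries.coeff (R := Λ) (n + 1)) ∘ₗ LinearMap.snd Λ V (PowerSeries Λ))

/-!
We model `C̄ = Λ((x⁻¹))` by `LaurentSeries Λ = HahnSeries ℤ Λ` in the variable `t = x⁻¹`;
a Laurent series `z` represents `Σ_i aᵢ xⁱ` with `aᵢ = z.coeff (-i)`, and `x` acts by
multiplication by `xbar = single (-1) 1`.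
-/

/-- The element `x` of `C̄ = Λ((x⁻¹))`. -/
def xbar : LaurentSeries Λ := HahnSeries.single (-1 : ℤ) (1 : Λ)

lemma headSupport_finite (f : ℕ → (Λ →ₗ[Λ] W)) (z : LaurentSeries Λ) :
    (Function.support fun n : ℕ => f n (z.coeff (-(n : ℤ)))).Finite := by
  have h1 : (z.support ∩ Set.Iic (0 : ℤ)).Finite := by
    rcases Set.eq_empty_or_nonempty (z.support ∩ Set.Iic (0 : ℤ)) with h | h
    · simp [h]
    · have hwf : (z.support ∩ Set.Iic (0 : ℤ)).IsWF :=
        z.isWF_support.mono Set.inter_subset_left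
      exact Set.Finite.subset (Set.finite_Icc (hwf.min h) 0)
        (fun y hy => Set.mem_Icc.mpr ⟨hwf.min_le h hy, hy.2⟩)
  have hinj : Function.Injective fun n : ℕ => -(n : ℤ) := fun a b hab => by
    simpa using hab
  refine Set.Finite.subset (Set.Finite.preimage (hinj.injOn) h1) ?_
  intro n hn
  have hz : z.coeff (-(n : ℤ)) ≠ 0 := by
    intro h0
    apply hn
    simp [h0]
  exact Set.mem_preimage.mpr ⟨hz, by simp⟩

/-- `z = Σ aᵢ xⁱ ↦ Σ_{i ≥ 0} f i aᵢ`, as a linear map on Laurent series (the sum is finite). -/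
def headMap (f : ℕ → (Λ →ₗ[Λ] W)) : LaurentSeries Λ →ₗ[Λ] W where
  toFun z := ∑ᶠ n : ℕ, f n (z.coeff (-(n : ℤ)))
  map_add' z w := by
    show (∑ᶠ n : ℕ, f n ((z + w).coeff (-(n : ℤ))))
        = (∑ᶠ n : ℕ, f n (z.coeff (-(n : ℤ)))) + ∑ᶠ n : ℕ, f n (w.coeff (-(n : ℤ)))
    rw [← finsum_add_distrib (headSupport_finite f z) (headSupport_finite f w)]
    exact finsum_congr fun n => by rw [HahnSeries.coeff_add, map_add]
  map_smul' a z := by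
    show (∑ᶠ n : ℕ, f n ((a • z).coeff (-(n : ℤ)))) = a • ∑ᶠ n : ℕ, f n (z.coeff (-(n : ℤ)))
    rw [smul_finsum]
    exact finsum_congr fun n => by rw [HahnSeries.coeff_smul, map_smul]

/-- The coefficient of `xⁱ` (i.e. of `t^{-i}`), as a linear functional on Laurent series. -/
def lcoeff (k : ℤ) : LaurentSeries Λ →ₗ[Λ] Λ where
  toFun z := z.coeff k
  map_add' _ _ := HahnSeries.coeff_add
  map_smul' _ _ := HahnSeries.coeff_smul

/-- A power series `q`, viewed as `Σ_{n≥0} (coeff n q) x^{-(n+1)}`, embedded into `Λ((x⁻¹))`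
(multiplying the usual embedding by `t = x⁻¹`). -/
def psToLaurentShift : PowerSeries Λ →ₗ[Λ] LaurentSeries Λ where
  toFun q := HahnSeries.single (1 : ℤ) (1 : Λ) * (HahnSeries.ofPowerSeries ℤ Λ q)
  map_add' q r := by
    show HahnSeries.single (1 : ℤ) (1 : Λ) * (HahnSeries.ofPowerSeries ℤ Λ (q + r))
        = HahnSeries.single (1 : ℤ) (1 : Λ) * (HahnSeries.ofPowerSeries ℤ Λ q)
          + HahnSeries.single (1 : ℤ) (1 : Λ) * (HahnSeries.ofPowerSeries ℤ Λ r)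
    rw [map_add, mul_add]
  map_smul' a q := by
    show HahnSeries.single (1 : ℤ) (1 : Λ) * (HahnSeries.ofPowerSeries ℤ Λ (a • q))
        = a • (HahnSeries.single (1 : ℤ) (1 : Λ) * HahnSeries.ofPowerSeries ℤ Λ q)
    rw [PowerSeries.smul_eq_C_mul, map_mul, HahnSeries.ofPowerSeries_C, HahnSeries.C_apply,
      mul_left_comm, HahnSeries.single_zero_mul_eq_smul]

/-- A polynomial `Σ aᵢ xⁱ`, viewed inside `Λ((x⁻¹))` by substituting `x = t⁻¹`. -/
def polyToLaurent : Polynomial Λ →ₗ[Λ] LaurentSeries Λ :=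
  polySum fun n => LinearMap.smulRight (LinearMap.id : Λ →ₗ[Λ] Λ) ((xbar : LaurentSeries Λ) ^ n)

/-- The map `i : C̄ → Č`. -/
def imap (F : FloerDatum Λ V) : LaurentSeries Λ →ₗ[Λ] (V × PowerSeries Λ) :=
  (headMap fun n => (F.U ^ n) ∘ₗ F.D₂).prod
    (toPS fun n => lcoeff ((n : ℤ) + 1))

/-- The map `j : Č → Ĉ`, `(α, q) ↦ (α, 0)`. -/
def jmap : (V × PowerSeries Λ) →ₗ[Λ] (V × Polynomial Λ) :=
  (LinearMap.fst Λ V (PowerSeries Λ)).prod 0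

/-- The map `p : Ĉ → C̄`,
`(α, Σ_{i≥0} aᵢ xⁱ) ↦ Σ_{i≤-1} D₁(U^{-i-1} α) xⁱ + Σ_{i≥0} aᵢ xⁱ`. -/
def pmap (F : FloerDatum Λ V) : (V × Polynomial Λ) →ₗ[Λ] LaurentSeries Λ :=
  (psToLaurentShift ∘ₗ (toPS fun n => F.D₁ ∘ₗ (F.U ^ n))) ∘ₗ LinearMap.fst Λ V (Polynomial Λ)
    + polyToLaurent ∘ₗ LinearMap.snd Λ V (Polynomial Λ)

/-- The chain homotopy `h : Č → Ĉ`, `h(α, Σ_{i≤-1} aᵢ xⁱ) = (0, -a₋₁)`. -/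
def hmap : (V × PowerSeries Λ) →ₗ[Λ] (V × Polynomial Λ) :=
  (0 : (V × PowerSeries Λ) →ₗ[Λ] V).prod
    (-((Algebra.linearMap Λ (Polynomial Λ)) ∘ₗ (PowerSeries.coeff (R := Λ) 0)
        ∘ₗ LinearMap.snd Λ V (PowerSeries Λ)))


-- ===== auxiliary lemmas =====
namespace FloerAux

variable (F : FloerDatum Λ V)

lemma dU_apply (v : V) : F.d (F.U v) = F.U (F.d v) + F.D₂ (F.D₁ v) := by
  have := LinearMap.ext_iff.mp F.U_rel v
  simp only [LinearMap.add_apply, LinearMap.sub_apply, LinearMap.comp_apply,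
    LinearMap.zero_apply] at this
  apply eq_of_sub_eq_zero
  rw [← neg_eq_zero, ← this]
  abel

lemma Ud_apply (v : V) : F.U (F.d v) = F.d (F.U v) - F.D₂ (F.D₁ v) := by
  rw [dU_apply]; abel

lemma Uk_D₂_mem (k : ℕ) (a : Λ) : (F.U ^ k) (F.D₂ a) ∈ F.gr (4 - 4 * (k : ZMod 8)) := by
  induction k with
  | zero => simpa using F.D₂_mem a
  | succ n ih =>
      have h4 : (4 - 4 * ((n + 1 : ℕ) : ZMod 8)) = (4 - 4 * (n : ZMod 8)) - 4 := by
        push_cast; ring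
      rw [pow_succ', Module.End.mul_apply, h4]
      exact F.U_mem _ _ ih

lemma D₁_Uk_D₂ (k : ℕ) (a : Λ) : F.D₁ ((F.U ^ k) (F.D₂ a)) = 0 := by
  refine F.D₁_vanish _ ?_ _ (Uk_D₂_mem F k a)
  have : ∀ c : ZMod 8, 4 - 4 * c ≠ 1 := by decide
  exact this _

lemma d_Uk_D₂ (k : ℕ) (a : Λ) : F.d ((F.U ^ k) (F.D₂ a)) = 0 := by
  induction k with
  | zero => simpa using LinearMap.ext_iff.mp F.d_D₂ a
  | succ n ih =>
      rw [pow_succ', Module.End.mul_apply, dU_apply, ih, D₁_Uk_D₂]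
      simp

lemma D₁_Uk_d (k : ℕ) (v : V) : F.D₁ ((F.U ^ k) (F.d v)) = 0 := by
  induction k generalizing v with
  | zero => simpa using LinearMap.ext_iff.mp F.D₁_d v
  | succ n ih =>
      rw [pow_succ, Module.End.mul_apply, Ud_apply, map_sub, map_sub, ih, zero_sub,
        neg_eq_zero]
      exact D₁_Uk_D₂ F n _

lemma finsum_nat_succ {N : Type*} [AddCommMonoid N] (f : ℕ → N)
    (hf : (Function.support f).Finite) :
    ∑ᶠ n, f n = f 0 + ∑ᶠ n, f (n + 1) := by
  have hr : Set.range (fun n : ℕ => n + 1) = ({0}ᶜ : Set ℕ) := by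
    ext n; cases n <;> simp
  rw [← finsum_mem_univ f, ← Set.union_compl_self ({0} : Set ℕ),
    finsum_mem_union' disjoint_compl_right
      ((Set.finite_singleton 0).inter_of_left _) (hf.inter_of_right _),
    finsum_mem_singleton, ← hr,
    finsum_mem_range (fun a b h => by omega)]

lemma toPS_coeff {M : Type*} [AddCommGroup M] [Module Λ M]
    (c : ℕ → (M →ₗ[Λ] Λ)) (m : M) (n : ℕ) :
    PowerSeries.coeff (R := Λ) n (toPS c m) = c n m := by
  show PowerSeries.coeff (R := Λ) n (PowerSeries.mk fun k => c k m) = c n m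
  exact PowerSeries.coeff_mk _ _

lemma xbar_mul_coeff (z : LaurentSeries Λ) (k : ℤ) : (xbar * z).coeff k = z.coeff (k + 1) := by
  have h : k = (k + 1) + -1 := by ring
  conv_lhs => rw [xbar, h]
  rw [HahnSeries.coeff_single_mul_add, one_mul]

lemma xbar_mul_ps (q : PowerSeries Λ) :
    (xbar : LaurentSeries Λ) * psToLaurentShift q = HahnSeries.ofPowerSeries ℤ Λ q := by
  show xbar * (HahnSeries.single (1 : ℤ) (1 : Λ) * _) = _
  rw [← mul_assoc, xbar, HahnSeries.single_mul_single, neg_add_cancel, one_mul,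
    HahnSeries.single_zero_one, one_mul]

lemma ps_decomp (q : PowerSeries Λ) :
    (HahnSeries.ofPowerSeries ℤ Λ) q
      = (PowerSeries.coeff (R := Λ) 0 q) • (1 : LaurentSeries Λ)
        + psToLaurentShift (PowerSeries.mk fun n => PowerSeries.coeff (R := Λ) (n + 1) q) := by
  have hq : q = PowerSeries.C (R := Λ) (PowerSeries.coeff (R := Λ) 0 q)
      + PowerSeries.X * PowerSeries.mk (fun n => PowerSeries.coeff (R := Λ) (n + 1) q) := by
    refine PowerSeries.ext fun n => ?_
    cases n with
    | zero => simp
    | succ m => simp [PowerSeries.coeff_succ_X_mul]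
  conv_lhs => rw [hq]
  rw [map_add, map_mul, HahnSeries.ofPowerSeries_C, HahnSeries.ofPowerSeries_X]
  congr 1
  rw [HahnSeries.C_apply, ← HahnSeries.single_zero_mul_eq_smul, mul_one]

lemma algebraMap_eq_single (a : Λ) :
    algebraMap Λ (LaurentSeries Λ) a = HahnSeries.single (0 : ℤ) a := by
  rw [HahnSeries.algebraMap_apply', PowerSeries.algebraMap_apply, Algebra.algebraMap_self, RingHom.id_apply,
    HahnSeries.ofPowerSeries_C, HahnSeries.C_apply]

lemma polyToLaurent_eq (P : Polynomial Λ) :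
    polyToLaurent P = Polynomial.aeval (xbar : LaurentSeries Λ) P := by
  induction P using Polynomial.induction_on' with
  | add p q hp hq => rw [map_add, map_add, hp, hq]
  | monomial n a =>
      rw [Polynomial.aeval_monomial]
      show (Polynomial.monomial n a).sum
        (fun i b => (LinearMap.smulRight (LinearMap.id : Λ →ₗ[Λ] Λ) (xbar ^ i)) b) = _
      rw [Polynomial.sum_monomial_index _ _ (by simp)]
      rw [LinearMap.smulRight_apply, LinearMap.id_apply,
        ← HahnSeries.single_zero_mul_eq_smul, algebraMap_eq_single]

lemma polyToLaurent_C (a : Λ) :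
    polyToLaurent (Polynomial.C a) = a • (1 : LaurentSeries Λ) := by
  rw [polyToLaurent_eq, Polynomial.aeval_C, algebraMap_eq_single,
    ← mul_one (HahnSeries.single (0 : ℤ) a), HahnSeries.single_zero_mul_eq_smul]

lemma polyToLaurent_X_mul (P : Polynomial Λ) :
    polyToLaurent (Polynomial.X * P) = xbar * polyToLaurent P := by
  rw [polyToLaurent_eq, polyToLaurent_eq, map_mul, Polynomial.aeval_X]

lemma lmap_finsum {A B : Type*} [AddCommMonoid A] [AddCommMonoid B]
    [Module Λ A] [Module Λ B] (g : A →ₗ[Λ] B) {ι : Type*} (f : ι → A)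
    (hf : (Function.support f).Finite) : g (∑ᶠ i, f i) = ∑ᶠ i, g (f i) := by
  have := g.toAddMonoidHom.map_finsum hf
  simpa using this

lemma headMap_apply {W : Type*} [AddCommGroup W] [Module Λ W]
    (f : ℕ → (Λ →ₗ[Λ] W)) (z : LaurentSeries Λ) :
    headMap f z = ∑ᶠ n : ℕ, f n (z.coeff (-(n : ℤ))) := rfl

lemma polySum_apply {W : Type*} [AddCommGroup W] [Module Λ W]
    (f : ℕ → (Λ →ₗ[Λ] W)) (P : Polynomial Λ) :
    polySum f P = P.sum fun i a => f i a := rfl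

lemma lcoeff_apply (k : ℤ) (z : LaurentSeries Λ) : lcoeff k z = z.coeff k := rfl

lemma psToLaurentShift_apply (q : PowerSeries Λ) :
    psToLaurentShift q
      = HahnSeries.single (1 : ℤ) (1 : Λ) * (HahnSeries.ofPowerSeries ℤ Λ q) := rfl

end FloerAux

open FloerAux

/-- (1) `ď ∘ i = 0`; (2) `j ∘ ď = d̂ ∘ j`; (3) `p ∘ d̂ = 0`; (4) `i` and `p` commute with the
`x`-actions; (5) `j` commutes with the `x`-actions up to the chain homotopy `h`. -/
theorem stmt_3 (F : FloerDatum Λ V) :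
    checkd F ∘ₗ imap F = 0 ∧
    jmap ∘ₗ checkd F = hatd F ∘ₗ jmap ∧
    pmap F ∘ₗ hatd F = 0 ∧
    (∀ z : LaurentSeries Λ, imap F (xbar * z) = checkX F (imap F z)) ∧
    (∀ w : V × Polynomial Λ, pmap F (hatX F w) = xbar * pmap F w) ∧
    jmap ∘ₗ checkX F - hatX F ∘ₗ jmap = hatd F ∘ₗ hmap + hmap ∘ₗ checkd F := by
  refine ⟨?_, ?_, ?_, ?_, ?_, ?_⟩
  · -- (1) ď ∘ i = 0
    refine LinearMap.ext fun z => ?_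
    simp only [LinearMap.comp_apply, LinearMap.zero_apply]
    have hfin := headSupport_finite (fun n => (F.U ^ n) ∘ₗ F.D₂) z
    unfold checkd imap
    simp only [LinearMap.prod_apply, Function.prod, LinearMap.comp_apply, LinearMap.fst_apply,
      Prod.mk_eq_zero]
    constructor
    · rw [headMap_apply, lmap_finsum F.d _ hfin]
      refine finsum_eq_zero_of_forall_eq_zero fun n => ?_
      exact d_Uk_D₂ F n _
    · refine PowerSeries.ext fun k => ?_
      rw [toPS_coeff, headMap_apply, lmap_finsum (F.D₁ ∘ₗ F.U ^ k) _ hfin, map_zero]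
      refine finsum_eq_zero_of_forall_eq_zero fun n => ?_
      show F.D₁ ((F.U ^ k) ((F.U ^ n) (F.D₂ _))) = 0
      rw [← Module.End.mul_apply, ← pow_add]
      exact D₁_Uk_D₂ F _ _
  · -- (2) j ∘ ď = d̂ ∘ j
    refine LinearMap.ext fun w => ?_
    obtain ⟨α, q⟩ := w
    simp only [LinearMap.comp_apply]
    unfold jmap checkd hatd
    simp only [LinearMap.prod_apply, Function.prod, LinearMap.comp_apply, LinearMap.fst_apply,
      LinearMap.snd_apply, LinearMap.sub_apply, LinearMap.zero_apply, map_zero, sub_zero,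
      Prod.mk.injEq]
  · -- (3) p ∘ d̂ = 0
    refine LinearMap.ext fun w => ?_
    obtain ⟨α, P⟩ := w
    simp only [LinearMap.comp_apply, LinearMap.zero_apply]
    unfold pmap hatd
    simp only [LinearMap.prod_apply, Function.prod, LinearMap.comp_apply, LinearMap.fst_apply,
      LinearMap.snd_apply, LinearMap.add_apply, LinearMap.sub_apply, LinearMap.zero_apply,
      map_zero, add_zero]
    have hz : toPS (fun n => F.D₁ ∘ₗ (F.U ^ n))
        (F.d α - polySum (fun i => (F.U ^ i) ∘ₗ F.D₂) P) = 0 := by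
      refine PowerSeries.ext fun k => ?_
      rw [toPS_coeff, map_zero, map_sub, LinearMap.comp_apply]
      rw [show F.D₁ ((F.U ^ k) (F.d α)) = 0 from D₁_Uk_d F k α, zero_sub, neg_eq_zero,
        polySum_apply, Polynomial.sum, map_sum]
      refine Finset.sum_eq_zero fun i _ => ?_
      show F.D₁ ((F.U ^ k) ((F.U ^ i) (F.D₂ _))) = 0
      rw [← Module.End.mul_apply, ← pow_add]
      exact D₁_Uk_D₂ F _ _
    rw [hz, map_zero]
  · -- (4a) i commutes with x-actions
    intro z
    unfold imap checkX
    simp only [LinearMap.prod_apply, Function.prod, LinearMap.comp_apply, LinearMap.fst_apply,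
      LinearMap.snd_apply, LinearMap.add_apply, Prod.mk.injEq]
    constructor
    · rw [headMap_apply, headMap_apply]
      have hfun : (fun n : ℕ =>
            ((F.U ^ n) ∘ₗ F.D₂) (((xbar : LaurentSeries Λ) * z).coeff (-(n : ℤ))))
          = fun n : ℕ => ((F.U ^ n) ∘ₗ F.D₂) (z.coeff (-(n : ℤ) + 1)) := by
        funext n
        rw [xbar_mul_coeff]
      have hfin := headSupport_finite (fun n => (F.U ^ n) ∘ₗ F.D₂) (xbar * z)
      rw [hfun] at hfin ⊢
      rw [finsum_nat_succ _ hfin, add_comm]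
      congr 1
      · rw [lmap_finsum F.U _ (headSupport_finite (fun n => (F.U ^ n) ∘ₗ F.D₂) z)]
        refine finsum_congr fun n => ?_
        show ((F.U ^ (n + 1)) ∘ₗ F.D₂) (z.coeff (-((n : ℕ) + 1 : ℕ) + 1))
            = F.U (((F.U ^ n) ∘ₗ F.D₂) (z.coeff (-(n : ℤ))))
        have hc : (-((n : ℕ) + 1 : ℕ) + 1 : ℤ) = -(n : ℤ) := by push_cast; ring
        rw [hc, LinearMap.comp_apply, LinearMap.comp_apply, pow_succ', Module.End.mul_apply]
      · show ((F.U ^ 0) ∘ₗ F.D₂) (z.coeff (-((0 : ℕ) : ℤ) + 1)) = _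
        rw [toPS_coeff, lcoeff_apply]
        norm_num
    · refine PowerSeries.ext fun k => ?_
      rw [toPS_coeff, toPS_coeff, toPS_coeff, lcoeff_apply, lcoeff_apply, xbar_mul_coeff]
      norm_cast
  · -- (4b) p commutes with x-actions
    rintro ⟨α, P⟩
    unfold pmap hatX
    simp only [LinearMap.prod_apply, Function.prod, LinearMap.comp_apply, LinearMap.fst_apply,
      LinearMap.snd_apply, LinearMap.add_apply, LinearMap.mulLeft_apply,
      Algebra.linearMap_apply]
    rw [mul_add, xbar_mul_ps, ps_decomp, map_add, polyToLaurent_X_mul, toPS_coeff]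
    have h0 : (F.D₁ ∘ₗ F.U ^ 0) α = F.D₁ α := by
      rw [LinearMap.comp_apply, pow_zero, Module.End.one_apply]
    have hts : (PowerSeries.mk fun n =>
          PowerSeries.coeff (R := Λ) (n + 1) (toPS (fun m => F.D₁ ∘ₗ F.U ^ m) α))
        = toPS (fun m => F.D₁ ∘ₗ F.U ^ m) (F.U α) := by
      refine PowerSeries.ext fun k => ?_
      rw [PowerSeries.coeff_mk, toPS_coeff, toPS_coeff]
      show F.D₁ ((F.U ^ (k + 1)) α) = F.D₁ ((F.U ^ k) (F.U α))
      rw [pow_succ, Module.End.mul_apply]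
    rw [hts, h0]
    have hC : (algebraMap Λ (Polynomial Λ)) (F.D₁ α) = Polynomial.C (F.D₁ α) := rfl
    rw [hC, polyToLaurent_C]
    abel
  · -- (5) homotopy
    refine LinearMap.ext fun w => ?_
    obtain ⟨α, q⟩ := w
    simp only [LinearMap.sub_apply, LinearMap.add_apply, LinearMap.comp_apply]
    unfold jmap hatX checkX hatd hmap checkd
    simp only [LinearMap.prod_apply, Function.prod, LinearMap.comp_apply, LinearMap.fst_apply,
      LinearMap.snd_apply, LinearMap.add_apply, LinearMap.sub_apply, LinearMap.zero_apply,
      LinearMap.neg_apply, Algebra.linearMap_apply, LinearMap.mulLeft_apply, map_neg,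
      mul_zero, add_zero, map_zero, Prod.mk_sub_mk, Prod.mk_add_mk]
    have hC : ∀ c : Λ, (algebraMap Λ (Polynomial Λ)) c = Polynomial.C c := fun c => rfl
    have hps : ∀ c : Λ, polySum (fun i => (F.U ^ i) ∘ₗ F.D₂) (Polynomial.C c)
        = F.D₂ c := by
      intro c
      rw [polySum_apply, Polynomial.sum_C_index (by simp)]
      show (F.U ^ 0) (F.D₂ c) = F.D₂ c
      rw [pow_zero, Module.End.one_apply]
    rw [hC, hC, hps, toPS_coeff]
    have h0 : (F.D₁ ∘ₗ F.U ^ 0) α = F.D₁ α := by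
      rw [LinearMap.comp_apply, pow_zero, Module.End.one_apply]
    rw [h0]
    refine Prod.ext ?_ ?_ <;> simp
end
end

section
/- Let (C, d, U, D₁, D₂) be a Floer datum over a field Λ, with Ĉ, Č, C̄ and the maps i, j, p as defined in the context. Since ď ∘ i = 0, j ∘ ď = d̂ ∘ j, and p ∘ d̂ = 0, the maps i, j, p induce Λ-linear maps on homology i_* : C̄ → Ȟ, j_* : Ȟ → Ĥ, p_* : Ĥ → C̄, where Ĥ := ker d̂ / im d̂, Ȟ := ker ď / im ď, and the homology of (C̄, 0) is C̄ itself. These maps form an exact triangle: im i_* = ker j_* in Ȟ, im j_* = ker p_* in Ĥ, and im p_* = ker i_* in C̄. -/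
noncomputable section

variable (Λ : Type*) (V : Type*) [Field Λ] [AddCommGroup V] [Module Λ V]

variable {Λ V}
variable {W : Type*} [AddCommGroup W] [Module Λ W]
variable {M : Type*} [AddCommGroup M] [Module Λ M]

/-- The homology `Ĥ = ker d̂ / im d̂`. -/
abbrev HatHomology (F : FloerDatum Λ V) :=
  LinearMap.ker (hatd F) ⧸
    ((LinearMap.range (hatd F)).comap (LinearMap.ker (hatd F)).subtype)

/-- The homology `Ȟ = ker ď / im ď`. -/
abbrev CheckHomology (F : FloerDatum Λ V) :=
  LinearMap.ker (checkd F) ⧸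
    ((LinearMap.range (checkd F)).comap (LinearMap.ker (checkd F)).subtype)

section ExactTriangleAux

variable (F : FloerDatum Λ V)

lemma polySum_apply (f : ℕ → (Λ →ₗ[Λ] W)) (P : Polynomial Λ) :
    polySum f P = P.sum fun i a => f i a := rfl

lemma toPS_coeff (c : ℕ → (M →ₗ[Λ] Λ)) (m : M) (n : ℕ) :
    PowerSeries.coeff (R := Λ) n (toPS c m) = c n m := by
  simp [toPS, PowerSeries.coeff_mk]

lemma lcoeff_apply (k : ℤ) (z : LaurentSeries Λ) : lcoeff k z = z.coeff k := rfl

lemma U_pow_mem (k : ℕ) (i : ZMod 8) (v : V) (hv : v ∈ F.gr i) :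
    (F.U ^ k) v ∈ F.gr (i - 4 * (k : ZMod 8)) := by
  induction k with
  | zero => simpa using hv
  | succ k ih =>
    have h1 : (F.U ^ (k + 1)) v = F.U ((F.U ^ k) v) := by
      rw [pow_succ', Module.End.mul_apply]
    rw [h1]
    have h2 := F.U_mem _ _ ih
    convert h2 using 2
    push_cast
    ring

lemma D1_U_D2_apply (k : ℕ) (a : Λ) : F.D₁ ((F.U ^ k) (F.D₂ a)) = 0 := by
  have h : ∀ c : ZMod 8, (4 : ZMod 8) - 4 * c ≠ 1 := by decide
  exact F.D₁_vanish _ (h _) _ (U_pow_mem F k 4 _ (F.D₂_mem a))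

lemma drel (w : V) : F.d (F.U w) = F.U (F.d w) + F.D₂ (F.D₁ w) := by
  have h0 := LinearMap.ext_iff.mp F.U_rel w
  simp only [LinearMap.add_apply, LinearMap.sub_apply, LinearMap.comp_apply,
    LinearMap.zero_apply] at h0
  have h : F.U (F.d w) + F.D₂ (F.D₁ w) - F.d (F.U w) = 0 := by rw [← h0]; abel
  exact (sub_eq_zero.mp h).symm

lemma d_U_D2_apply (n : ℕ) (a : Λ) : F.d ((F.U ^ n) (F.D₂ a)) = 0 := by
  induction n with
  | zero =>
    have := LinearMap.ext_iff.mp F.d_D₂ a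
    simpa using this
  | succ n ih =>
    rw [pow_succ', Module.End.mul_apply, drel, ih, map_zero, zero_add, D1_U_D2_apply, map_zero]

lemma D1_U_d_apply (n : ℕ) : ∀ v : V, F.D₁ ((F.U ^ n) (F.d v)) = 0 := by
  induction n with
  | zero =>
    intro v
    have := LinearMap.ext_iff.mp F.D₁_d v
    simpa using this
  | succ n ih =>
    intro v
    have hud : F.U (F.d v) = F.d (F.U v) - F.D₂ (F.D₁ v) := by rw [drel]; abel
    rw [pow_succ, Module.End.mul_apply, hud, map_sub, map_sub, ih, D1_U_D2_apply, sub_zero]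

end ExactTriangleAux
section ExactTriangleAux2

lemma xbar_pow (n : ℕ) : (xbar : LaurentSeries Λ) ^ n = HahnSeries.single (-(n : ℤ)) 1 := by
  induction n with
  | zero => simp [xbar]
  | succ n ih =>
    rw [pow_succ, ih, xbar, HahnSeries.single_mul_single, mul_one]
    congr 1
    push_cast
    ring_nf

lemma polyToLaurent_coeff (P : Polynomial Λ) (k : ℤ) :
    (polyToLaurent (Λ := Λ) P).coeff k
      = ∑ n ∈ P.support, if k = -(n : ℤ) then P.coeff n else 0 := by
  have h := map_sum (lcoeff (Λ := Λ) k)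
    (fun n => P.coeff n • ((xbar : LaurentSeries Λ) ^ n)) P.support
  rw [polyToLaurent, polySum_apply, Polynomial.sum]
  simp only [LinearMap.smulRight_apply, LinearMap.id_apply]
  rw [show ((∑ n ∈ P.support, P.coeff n • ((xbar : LaurentSeries Λ) ^ n)).coeff k)
      = lcoeff k (∑ n ∈ P.support, P.coeff n • ((xbar : LaurentSeries Λ) ^ n)) from rfl, h]
  refine Finset.sum_congr rfl fun n _ => ?_
  rw [lcoeff_apply, HahnSeries.coeff_smul, xbar_pow, HahnSeries.coeff_single]
  split_ifs <;> simp [mul_comm]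

lemma polyToLaurent_coeff_neg (P : Polynomial Λ) (n : ℕ) :
    (polyToLaurent (Λ := Λ) P).coeff (-(n : ℤ)) = P.coeff n := by
  rw [polyToLaurent_coeff]
  have : ∀ m ∈ P.support, (if -(n:ℤ) = -(m : ℤ) then P.coeff m else 0)
      = if m = n then P.coeff m else 0 := by
    intro m _
    congr 1
    simp only [neg_inj, Nat.cast_inj, eq_iff_iff]
    omega
  rw [Finset.sum_congr rfl this, Finset.sum_ite_eq' P.support n P.coeff]
  split_ifs with h
  · rfl
  · exact (Polynomial.notMem_support_iff.mp h).symm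

lemma polyToLaurent_coeff_pos (P : Polynomial Λ) (k : ℤ) (hk : 0 < k) :
    (polyToLaurent (Λ := Λ) P).coeff k = 0 := by
  rw [polyToLaurent_coeff]
  refine Finset.sum_eq_zero fun n _ => ?_
  rw [if_neg]
  omega

lemma psShift_coeff_succ (q : PowerSeries Λ) (n : ℕ) :
    (psToLaurentShift (Λ := Λ) q).coeff ((n : ℤ) + 1) = PowerSeries.coeff (R := Λ) n q := by
  show (HahnSeries.single (1 : ℤ) (1 : Λ) * HahnSeries.ofPowerSeries ℤ Λ q).coeff ((n : ℤ) + 1) = _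
  rw [HahnSeries.coeff_single_mul_add, one_mul, HahnSeries.ofPowerSeries_apply_coeff]

lemma psShift_coeff_nonpos (q : PowerSeries Λ) (k : ℤ) (hk : k ≤ 0) :
    (psToLaurentShift (Λ := Λ) q).coeff k = 0 := by
  show (HahnSeries.single (1 : ℤ) (1 : Λ) * HahnSeries.ofPowerSeries ℤ Λ q).coeff k = 0
  have hs : k = (k - 1) + 1 := by ring
  rw [hs, HahnSeries.coeff_single_mul_add, HahnSeries.ofPowerSeries_apply,
    HahnSeries.embDomain_notin_range, mul_zero]
  rintro ⟨m, hm⟩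
  change ((m : ℤ)) = k - 1 at hm
  omega

end ExactTriangleAux2
section ExactTriangleAux3

/-- The polynomial part `Σ_{n≥0} z.coeff(-n) Xⁿ` of a Laurent series. -/
def headPoly (z : LaurentSeries Λ) : Polynomial Λ :=
  ∑ n ∈ (headSupport_finite (fun _ => (LinearMap.id : Λ →ₗ[Λ] Λ)) z).toFinset,
    Polynomial.C (z.coeff (-(n : ℤ))) * Polynomial.X ^ n

lemma headPoly_coeff (z : LaurentSeries Λ) (n : ℕ) :
    (headPoly z).coeff n = z.coeff (-(n : ℤ)) := by
  rw [headPoly, Polynomial.finset_sum_coeff]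
  simp only [Polynomial.coeff_C_mul, Polynomial.coeff_X_pow, mul_ite, mul_one, mul_zero]
  rw [Finset.sum_ite_eq (headSupport_finite (fun _ => (LinearMap.id : Λ →ₗ[Λ] Λ)) z).toFinset n
    (fun m => z.coeff (-(m : ℤ)))]
  split_ifs with h
  · rfl
  · rw [Set.Finite.mem_toFinset, Function.mem_support, not_not] at h
    have h2 : z.coeff (-(n : ℤ)) = 0 := by simpa using h
    exact h2.symm

/-- The tail (negative powers of `x`) of a Laurent series, as a power series in `x⁻¹`. -/
def tailPS (z : LaurentSeries Λ) : PowerSeries Λ :=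
  PowerSeries.mk fun n => z.coeff ((n : ℤ) + 1)

lemma z_decomp (z : LaurentSeries Λ) :
    polyToLaurent (headPoly z) + psToLaurentShift (tailPS z) = z := by
  apply HahnSeries.coeff_injective
  funext k
  show (polyToLaurent (headPoly z)).coeff k + (psToLaurentShift (tailPS z)).coeff k = z.coeff k
  rcases le_or_gt k 0 with hk | hk
  · obtain ⟨n, rfl⟩ : ∃ n : ℕ, k = -(n : ℤ) := ⟨(-k).toNat, by omega⟩
    rw [polyToLaurent_coeff_neg, headPoly_coeff, psShift_coeff_nonpos _ _ (by omega), add_zero]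
  · obtain ⟨n, rfl⟩ : ∃ n : ℕ, k = (n : ℤ) + 1 := ⟨(k - 1).toNat, by omega⟩
    rw [polyToLaurent_coeff_pos _ _ (by omega), psShift_coeff_succ, zero_add, tailPS,
      PowerSeries.coeff_mk]

lemma split_eq {P Q : Polynomial Λ} {s r : PowerSeries Λ}
    (h : polyToLaurent P + psToLaurentShift s = polyToLaurent Q + psToLaurentShift r) :
    P = Q ∧ s = r := by
  constructor
  · ext n
    have h1 := congrArg (fun z : LaurentSeries Λ => z.coeff (-(n : ℤ))) h
    simpa [HahnSeries.coeff_add, polyToLaurent_coeff_neg,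
      psShift_coeff_nonpos _ _ (by omega : -(n:ℤ) ≤ 0)] using h1
  · ext n
    have h1 := congrArg (fun z : LaurentSeries Λ => z.coeff ((n : ℤ) + 1)) h
    simpa [HahnSeries.coeff_add, psShift_coeff_succ,
      polyToLaurent_coeff_pos _ _ (by omega : (0:ℤ) < (n:ℤ) + 1)] using h1

lemma headPoly_polyToLaurent (P : Polynomial Λ) : headPoly (polyToLaurent P) = P := by
  ext n
  rw [headPoly_coeff, polyToLaurent_coeff_neg]

lemma polySum_eq_finsum (f : ℕ → (Λ →ₗ[Λ] W)) (P : Polynomial Λ) :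
    polySum f P = ∑ᶠ n, f n (P.coeff n) := by
  rw [polySum_apply, Polynomial.sum]
  refine (finsum_eq_finset_sum_of_support_subset _ ?_).symm
  intro n hn
  rw [Function.mem_support] at hn
  by_contra hns
  rw [Finset.mem_coe, Polynomial.mem_support_iff, not_not] at hns
  rw [hns, map_zero] at hn
  exact hn rfl

variable (F : FloerDatum Λ V)

lemma imap_split (P : Polynomial Λ) (r : PowerSeries Λ) :
    imap F (polyToLaurent P + psToLaurentShift r)
      = (polySum (fun n => (F.U ^ n) ∘ₗ F.D₂) P, r) := by
  set z0 := polyToLaurent P + psToLaurentShift r with hz0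
  have hcoeffneg : ∀ n : ℕ, z0.coeff (-(n : ℤ)) = P.coeff n := by
    intro n
    rw [hz0]
    show (polyToLaurent P).coeff _ + (psToLaurentShift r).coeff _ = _
    rw [polyToLaurent_coeff_neg, psShift_coeff_nonpos _ _ (by omega : -(n:ℤ) ≤ 0), add_zero]
  have hcoeffpos : ∀ n : ℕ, z0.coeff ((n : ℤ) + 1) = PowerSeries.coeff (R := Λ) n r := by
    intro n
    rw [hz0]
    show (polyToLaurent P).coeff _ + (psToLaurentShift r).coeff _ = _
    rw [polyToLaurent_coeff_pos _ _ (by omega : (0:ℤ) < (n:ℤ) + 1), psShift_coeff_succ, zero_add]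
  refine Prod.ext ?_ ?_
  · show headMap (fun n => (F.U ^ n) ∘ₗ F.D₂) z0 = _
    show (∑ᶠ n : ℕ, ((F.U ^ n) ∘ₗ F.D₂) (z0.coeff (-(n : ℤ)))) = _
    rw [polySum_eq_finsum]
    exact finsum_congr fun n => by rw [hcoeffneg]
  · show toPS (fun n => lcoeff ((n : ℤ) + 1)) z0 = r
    ext n
    rw [toPS_coeff, lcoeff_apply, hcoeffpos]

lemma imap_eq (z : LaurentSeries Λ) :
    imap F z = (polySum (fun n => (F.U ^ n) ∘ₗ F.D₂) (headPoly z), tailPS z) := by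
  conv_lhs => rw [← z_decomp z]
  rw [imap_split]

lemma hatd_apply (α : V) (P : Polynomial Λ) :
    hatd F (α, P) = (F.d α - polySum (fun n => (F.U ^ n) ∘ₗ F.D₂) P, 0) := by
  simp [hatd, LinearMap.prod_apply, LinearMap.sub_apply, LinearMap.comp_apply]

lemma checkd_apply (α : V) (q : PowerSeries Λ) :
    checkd F (α, q) = (F.d α, toPS (fun n => F.D₁ ∘ₗ (F.U ^ n)) α) := by
  simp [checkd, LinearMap.prod_apply, LinearMap.comp_apply]

lemma pmap_apply (α : V) (P : Polynomial Λ) :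
    pmap F (α, P)
      = psToLaurentShift (toPS (fun n => F.D₁ ∘ₗ (F.U ^ n)) α) + polyToLaurent P := by
  simp [pmap, LinearMap.add_apply, LinearMap.comp_apply]

lemma jmap_apply (α : V) (q : PowerSeries Λ) :
    (jmap (α, q) : V × Polynomial Λ) = (α, 0) := by
  simp [jmap, LinearMap.prod_apply]

lemma d_polySum (P : Polynomial Λ) :
    F.d (polySum (fun n => (F.U ^ n) ∘ₗ F.D₂) P) = 0 := by
  rw [polySum_apply, Polynomial.sum, map_sum]
  exact Finset.sum_eq_zero fun n _ => by
    simpa using d_U_D2_apply F n (P.coeff n)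

lemma D1_U_polySum (m : ℕ) (P : Polynomial Λ) :
    F.D₁ ((F.U ^ m) (polySum (fun n => (F.U ^ n) ∘ₗ F.D₂) P)) = 0 := by
  rw [polySum_apply, Polynomial.sum, map_sum, map_sum]
  refine Finset.sum_eq_zero fun n _ => ?_
  have : (F.U ^ m) ((F.U ^ n) (F.D₂ (P.coeff n))) = (F.U ^ (m + n)) (F.D₂ (P.coeff n)) := by
    rw [← Module.End.mul_apply, ← pow_add]
  simpa [this] using D1_U_D2_apply F (m + n) (P.coeff n)

lemma checkd_imap (z : LaurentSeries Λ) : checkd F (imap F z) = 0 := by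
  rw [imap_eq, checkd_apply, d_polySum]
  refine Prod.ext rfl ?_
  show toPS (fun n => F.D₁ ∘ₗ (F.U ^ n)) _ = 0
  ext n
  rw [toPS_coeff, map_zero]
  simpa using D1_U_polySum F n (headPoly z)

lemma pmap_hatd (w : V × Polynomial Λ) : pmap F (hatd F w) = 0 := by
  obtain ⟨α, P⟩ := w
  rw [hatd_apply, pmap_apply, map_zero, add_zero]
  have : toPS (fun n => F.D₁ ∘ₗ (F.U ^ n)) (F.d α - polySum (fun n => (F.U ^ n) ∘ₗ F.D₂) P)
      = 0 := by
    ext n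
    rw [toPS_coeff, map_zero]
    simp only [LinearMap.comp_apply, map_sub]
    rw [D1_U_d_apply F n α, D1_U_polySum F n P, sub_zero]
  rw [this, map_zero]

lemma jcomm (w : V × PowerSeries Λ) : hatd F (jmap w) = jmap (checkd F w) := by
  obtain ⟨α, q⟩ := w
  rw [checkd_apply, jmap_apply, jmap_apply, hatd_apply, map_zero, sub_zero]

end ExactTriangleAux3

/-- Since `ď ∘ i = 0`, `j ∘ ď = d̂ ∘ j` and `p ∘ d̂ = 0`, the maps `i`, `j`, `p` induce
`Λ`-linear maps `i⁎ : C̄ → Ȟ`, `j⁎ : Ȟ → Ĥ`, `p⁎ : Ĥ → C̄` (the homology of `(C̄, 0)` being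
`C̄` itself), and these form an exact triangle. -/
theorem stmt_6 (F : FloerDatum Λ V) :
    ∃ (istar : LaurentSeries Λ →ₗ[Λ] CheckHomology F)
      (jstar : CheckHomology F →ₗ[Λ] HatHomology F)
      (pstar : HatHomology F →ₗ[Λ] LaurentSeries Λ),
      (∀ (z : LaurentSeries Λ) (hz : imap F z ∈ LinearMap.ker (checkd F)),
        istar z = Submodule.Quotient.mk (⟨imap F z, hz⟩ : LinearMap.ker (checkd F))) ∧
      (∀ (w : LinearMap.ker (checkd F)) (hw : jmap w.1 ∈ LinearMap.ker (hatd F)),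
        jstar (Submodule.Quotient.mk w) =
          Submodule.Quotient.mk (⟨jmap w.1, hw⟩ : LinearMap.ker (hatd F))) ∧
      (∀ w : LinearMap.ker (hatd F), pstar (Submodule.Quotient.mk w) = pmap F w.1) ∧
      LinearMap.range istar = LinearMap.ker jstar ∧
      LinearMap.range jstar = LinearMap.ker pstar ∧
      LinearMap.range pstar = LinearMap.ker istar := by
  classical
  have hkeri : ∀ z : LaurentSeries Λ, imap F z ∈ LinearMap.ker (checkd F) :=
    fun z => LinearMap.mem_ker.mpr (checkd_imap F z)
  have hkerj : ∀ w : V × PowerSeries Λ, w ∈ LinearMap.ker (checkd F) →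
      jmap w ∈ LinearMap.ker (hatd F) := by
    intro w hw
    rw [LinearMap.mem_ker] at hw ⊢
    rw [jcomm F w, hw, map_zero]
  have hcj : ((LinearMap.range (checkd F)).comap (LinearMap.ker (checkd F)).subtype) ≤
      Submodule.comap
        (LinearMap.codRestrict (LinearMap.ker (hatd F))
          (jmap ∘ₗ (LinearMap.ker (checkd F)).subtype)
          (fun w => show (jmap ∘ₗ (LinearMap.ker (checkd F)).subtype) w ∈ LinearMap.ker (hatd F) from hkerj w.1 w.2))
        ((LinearMap.range (hatd F)).comap (LinearMap.ker (hatd F)).subtype) := by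
    intro w hw
    simp only [Submodule.mem_comap, Submodule.coe_subtype, LinearMap.mem_range,
      LinearMap.codRestrict_apply, LinearMap.comp_apply] at hw ⊢
    obtain ⟨u, hu⟩ := hw
    exact ⟨jmap u, by rw [jcomm F u, hu]⟩
  have hcp : ((LinearMap.range (hatd F)).comap (LinearMap.ker (hatd F)).subtype) ≤
      LinearMap.ker (pmap F ∘ₗ (LinearMap.ker (hatd F)).subtype) := by
    intro w hw
    simp only [Submodule.mem_comap, Submodule.coe_subtype, LinearMap.mem_range] at hw
    obtain ⟨u, hu⟩ := hw
    rw [LinearMap.mem_ker, LinearMap.comp_apply, Submodule.coe_subtype, ← hu, pmap_hatd]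
  refine ⟨(Submodule.mkQ _) ∘ₗ LinearMap.codRestrict _ (imap F) hkeri,
    Submodule.mapQ _ _ (LinearMap.codRestrict (LinearMap.ker (hatd F))
      (jmap ∘ₗ (LinearMap.ker (checkd F)).subtype) (fun w => show (jmap ∘ₗ (LinearMap.ker (checkd F)).subtype) w ∈ LinearMap.ker (hatd F) from hkerj w.1 w.2)) hcj,
    Submodule.liftQ _ (pmap F ∘ₗ (LinearMap.ker (hatd F)).subtype) hcp,
    ?_, ?_, ?_, ?_, ?_, ?_⟩
  · intro z hz
    rfl
  · intro w hw
    rw [Submodule.mapQ_apply]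
    rfl
  · intro w
    rw [Submodule.liftQ_apply]
    rfl
  -- exactness at Ȟ
  · apply le_antisymm
    · rintro η ⟨z, rfl⟩
      rw [LinearMap.mem_ker, LinearMap.comp_apply, Submodule.mkQ_apply, Submodule.mapQ_apply,
        Submodule.Quotient.mk_eq_zero, Submodule.mem_comap]
      simp only [Submodule.coe_subtype, LinearMap.codRestrict_apply, LinearMap.comp_apply,
        LinearMap.mem_range]
      refine ⟨(0, -(headPoly z)), ?_⟩
      rw [hatd_apply, imap_eq, jmap_apply, map_zero, map_neg, zero_sub, neg_neg]
    · intro η hη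
      obtain ⟨⟨⟨α, q⟩, hwm⟩, rfl⟩ := Submodule.Quotient.mk_surjective _ η
      rw [LinearMap.mem_ker, Submodule.mapQ_apply, Submodule.Quotient.mk_eq_zero,
        Submodule.mem_comap] at hη
      simp only [Submodule.coe_subtype, LinearMap.codRestrict_apply, LinearMap.comp_apply,
        LinearMap.mem_range] at hη
      obtain ⟨⟨β, Q⟩, hu⟩ := hη
      rw [hatd_apply, jmap_apply, Prod.mk.injEq] at hu
      have hα : F.d β - polySum (fun n => (F.U ^ n) ∘ₗ F.D₂) Q = α := hu.1
      refine ⟨polyToLaurent (-Q) + psToLaurentShift (q - toPS (fun n => F.D₁ ∘ₗ (F.U ^ n)) β), ?_⟩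
      rw [LinearMap.comp_apply, Submodule.mkQ_apply, Submodule.Quotient.eq]
      rw [Submodule.mem_comap]
      simp only [Submodule.coe_subtype, LinearMap.mem_range, AddSubgroupClass.coe_sub,
        LinearMap.codRestrict_apply]
      refine ⟨(-β, 0), ?_⟩
      rw [checkd_apply, imap_split, map_neg, map_neg, Prod.ext_iff]
      constructor
      · show -F.d β = polySum (fun n => (F.U ^ n) ∘ₗ F.D₂) (-Q) - α
        rw [map_neg, ← hα]
        abel
      · show -(toPS (fun n => F.D₁ ∘ₗ (F.U ^ n)) β) =
          (q - toPS (fun n => F.D₁ ∘ₗ (F.U ^ n)) β) - q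
        abel
  -- exactness at Ĥ
  · apply le_antisymm
    · rintro η ⟨θ, rfl⟩
      obtain ⟨⟨⟨α, q⟩, hwm⟩, rfl⟩ := Submodule.Quotient.mk_surjective _ θ
      simp only [LinearMap.mem_ker, Submodule.mapQ_apply, Submodule.liftQ_apply,
        LinearMap.comp_apply, Submodule.coe_subtype, LinearMap.codRestrict_apply]
      rw [LinearMap.mem_ker, checkd_apply, Prod.mk_eq_zero] at hwm
      show pmap F (jmap (α, q)) = 0
      rw [jmap_apply, pmap_apply, hwm.2, map_zero, map_zero, add_zero]
    · intro η hη
      obtain ⟨⟨⟨α, P⟩, hwm⟩, rfl⟩ := Submodule.Quotient.mk_surjective _ η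
      rw [LinearMap.mem_ker, Submodule.liftQ_apply, LinearMap.comp_apply,
        Submodule.coe_subtype] at hη
      rw [pmap_apply] at hη
      have hsplit : polyToLaurent P + psToLaurentShift (toPS (fun n => F.D₁ ∘ₗ (F.U ^ n)) α)
          = polyToLaurent (0 : Polynomial Λ) + psToLaurentShift (0 : PowerSeries Λ) := by
        rw [map_zero, map_zero, add_zero, ← hη]
        abel
      obtain ⟨hP, hs⟩ := split_eq hsplit
      subst hP
      rw [LinearMap.mem_ker, hatd_apply, map_zero, sub_zero, Prod.mk_eq_zero] at hwm
      have hker0 : ((α, 0) : V × PowerSeries Λ) ∈ LinearMap.ker (checkd F) := by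
        rw [LinearMap.mem_ker, checkd_apply, hwm.1, hs]
        rfl
      refine ⟨Submodule.Quotient.mk ⟨(α, 0), hker0⟩, ?_⟩
      rw [Submodule.mapQ_apply]
      rfl
  -- exactness at C̄
  · apply le_antisymm
    · rintro z ⟨θ, rfl⟩
      obtain ⟨⟨⟨α, P⟩, hwm⟩, rfl⟩ := Submodule.Quotient.mk_surjective _ θ
      simp only [LinearMap.mem_ker, Submodule.liftQ_apply, LinearMap.comp_apply,
        Submodule.coe_subtype, Submodule.mkQ_apply]
      rw [Submodule.Quotient.mk_eq_zero, Submodule.mem_comap]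
      simp only [Submodule.coe_subtype, LinearMap.codRestrict_apply, LinearMap.mem_range]
      rw [LinearMap.mem_ker, hatd_apply, Prod.mk_eq_zero] at hwm
      have hdα : F.d α = polySum (fun n => (F.U ^ n) ∘ₗ F.D₂) P := by
        have := hwm.1
        rw [sub_eq_zero] at this
        exact this
      refine ⟨(α, 0), ?_⟩
      rw [checkd_apply]
      show _ = imap F (pmap F ((α, P) : V × Polynomial Λ))
      rw [pmap_apply, add_comm, imap_split, hdα]
    · intro z hz
      rw [LinearMap.mem_ker, LinearMap.comp_apply, Submodule.mkQ_apply,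
        Submodule.Quotient.mk_eq_zero, Submodule.mem_comap] at hz
      simp only [Submodule.coe_subtype, LinearMap.codRestrict_apply, LinearMap.mem_range] at hz
      obtain ⟨⟨β, r⟩, hu⟩ := hz
      rw [checkd_apply, imap_eq, Prod.mk.injEq] at hu
      have hmem : ((β, headPoly z) : V × Polynomial Λ) ∈ LinearMap.ker (hatd F) := by
        rw [LinearMap.mem_ker, hatd_apply, hu.1, sub_self]
        rfl
      refine ⟨Submodule.Quotient.mk ⟨(β, headPoly z), hmem⟩, ?_⟩
      rw [Submodule.liftQ_apply, LinearMap.comp_apply, Submodule.coe_subtype]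
      show pmap F ((β, headPoly z) : V × Polynomial Λ) = z
      rw [pmap_apply, hu.2, add_comm, z_decomp]
end
end

section
/- Let n ≥ 3 and let a₁, …, a_n be pairwise coprime integers with a_i ≥ 2 for each i. Then the real number R(a₁,…,a_n) is an odd integer not smaller than −1: there exists an integer m ≥ 0 such that R(a₁,…,a_n) = 2m − 1. -/
open Real

noncomputable section

/-- The `i`-th summand of the Fintushel–Stern invariant:
`(2/m)·Σ_{k=1}^{m-1} cot(πkA/m²)·cot(πk/m)·sin²(πk/m)`, where `A` is the (real) product of
the multiplicities. -/
def fsTerm (A : ℝ) (m : ℕ) : ℝ :=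
  (2 / (m : ℝ)) * ∑ k ∈ Finset.Icc 1 (m - 1),
    Real.cot (π * k * A / (m : ℝ) ^ 2) * Real.cot (π * k / (m : ℝ)) *
      Real.sin (π * k / (m : ℝ)) ^ 2

/-- The Fintushel–Stern invariant
`R(a₁,…,aₙ) = 2/a - 3 + n + Σᵢ (2/aᵢ)·Σ_{k=1}^{aᵢ-1} cot(πka/aᵢ²)·cot(πk/aᵢ)·sin²(πk/aᵢ)`. -/
def FSR (n : ℕ) (a : Fin n → ℕ) : ℝ :=
  2 / (∏ j, (a j : ℝ)) - 3 + n + ∑ i, fsTerm (∏ j, (a j : ℝ)) (a i)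


lemma cos_sum_eq_zero (m l : ℕ) (hm : 0 < m) (hml : ¬ m ∣ l) :
    ∑ k ∈ Finset.range m, Real.cos (2 * π * l * k / m) = 0 := by
  have hz : ∑ k ∈ Finset.range m, Complex.exp ((2 * π * l / m : ℝ) * Complex.I) ^ k = 0 := by
    set z : ℂ := Complex.exp ((2 * π * l / m : ℝ) * Complex.I) with hzdef
    have hz1 : z ≠ 1 := by
      intro h
      rw [hzdef, Complex.exp_eq_one_iff] at h
      obtain ⟨t, ht⟩ := h
      have ht' : ((2 * π * l / m : ℝ) : ℂ) * Complex.I = ((2 * π * t : ℝ) : ℂ) * Complex.I := by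
        push_cast at ht ⊢; linear_combination ht
      have ht'' := mul_right_cancel₀ Complex.I_ne_zero ht'
      have hR : (2 * π * l / m : ℝ) = 2 * π * t := Complex.ofReal_injective ht''
      have hm' : (m : ℝ) ≠ 0 := by positivity
      have hπ : (π : ℝ) ≠ 0 := Real.pi_ne_zero
      have hlr : (l : ℝ) = m * t := by
        have h2π : (2 * π : ℝ) ≠ 0 := by positivity
        field_simp at hR
        exact mul_left_cancel₀ h2π (by linear_combination (2 * π) * hR)
      have hl : (l : ℤ) = m * t := by exact_mod_cast hlr
      exact hml (Int.natCast_dvd_natCast.mp ⟨t, hl⟩)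
    have hzm : z ^ m = 1 := by
      rw [hzdef, ← Complex.exp_nat_mul, Complex.exp_eq_one_iff]
      refine ⟨l, ?_⟩
      have hm' : (m : ℂ) ≠ 0 := Nat.cast_ne_zero.mpr hm.ne'
      push_cast
      field_simp
    rw [geom_sum_eq hz1 m, hzm, sub_self, zero_div]
  have : ∀ k ∈ Finset.range m, Real.cos (2 * π * l * k / m)
      = (Complex.exp ((2 * π * l / m : ℝ) * Complex.I) ^ k).re := by
    intro k _
    rw [← Complex.exp_nat_mul]
    have : ((k : ℂ) * (((2 * π * l / m : ℝ) : ℂ) * Complex.I)) = ((2 * π * l * k / m : ℝ) * Complex.I) := by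
      push_cast; ring
    rw [this, Complex.exp_ofReal_mul_I_re]
  rw [Finset.sum_congr rfl this, ← Complex.re_sum, hz, Complex.zero_re]

lemma sin_mul_cos_eq (x : ℝ) : ∀ j : ℕ,
    Real.sin (2*(j+1)*x) * Real.cos x
      = (1 + Real.cos (2*(j+1)*x) + 2 * ∑ l ∈ Finset.range j, Real.cos (2*(l+1)*x)) * Real.sin x := by
  have key : ∀ A : ℝ, Real.sin (A + 2*x) * Real.cos x
      = Real.sin A * Real.cos x + (Real.cos A + Real.cos (A + 2*x)) * Real.sin x := by
    intro A
    rw [Real.sin_add, Real.cos_add, Real.sin_two_mul, Real.cos_two_mul]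
    linear_combination (2 * Real.sin A * Real.cos x) * (Real.sin_sq_add_cos_sq x)
  intro j
  induction j with
  | zero =>
    simp only [Nat.cast_zero, Finset.range_zero, Finset.sum_empty, mul_zero, add_zero]
    rw [show (2*(0+1)*x : ℝ) = 2*x by ring, Real.sin_two_mul, Real.cos_two_mul]
    ring
  | succ j ih =>
    have h1 : (2*((j:ℝ)+1+1)*x) = 2*((j:ℝ)+1)*x + 2*x := by ring
    push_cast
    rw [h1, key (2*((j:ℝ)+1)*x), Finset.sum_range_succ, ih]
    push_cast
    ring

lemma cos_sum_Icc (m l : ℕ) (hl1 : 1 ≤ l) (hl2 : l < m) :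
    ∑ k ∈ Finset.Icc 1 (m-1), Real.cos (2*π*l*k/m) = -1 := by
  have h0 := cos_sum_eq_zero m l (by omega) (fun h => absurd (Nat.le_of_dvd (by omega) h) (by omega))
  rw [Finset.range_eq_Ico, Finset.sum_eq_sum_Ico_succ_bot (by omega : 0 < m)] at h0
  have hIm : Finset.Ico (0+1) m = Finset.Icc 1 (m-1) := by
    rw [← Finset.Ico_add_one_right_eq_Icc]
    congr 1
    omega
  rw [hIm] at h0
  simp only [Nat.cast_zero, mul_zero, zero_div, Real.cos_zero] at h0
  linarith

lemma cot_sin_sum (m j : ℕ) (hj1 : 1 ≤ j) (hj2 : j < m) :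
    ∑ k ∈ Finset.Icc 1 (m-1), Real.cot (π*k/m) * Real.sin (2*π*j*k/m)
      = (m : ℝ) - 2*j := by
  have hm0 : 0 < m := by omega
  have hmR : (0:ℝ) < m := by exact_mod_cast hm0
  have point : ∀ k ∈ Finset.Icc 1 (m-1), Real.cot (π*k/m) * Real.sin (2*π*j*k/m)
      = 1 + Real.cos (2*π*j*k/m) + 2*∑ l ∈ Finset.range (j-1), Real.cos (2*π*((l:ℝ)+1)*k/m) := by
    intro k hk
    simp only [Finset.mem_Icc] at hk
    have hkR : (1:ℝ) ≤ k := by exact_mod_cast hk.1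
    have hkm : (k:ℝ) < m := by exact_mod_cast (by omega : k < m)
    have hxpos : 0 < π*k/m := by
      apply div_pos (by nlinarith [Real.pi_pos]) hmR
    have hxlt : π*k/m < π := by
      rw [div_lt_iff₀ hmR]
      nlinarith [Real.pi_pos]
    have hs : Real.sin (π*k/m) ≠ 0 := ne_of_gt (Real.sin_pos_of_pos_of_lt_pi hxpos hxlt)
    have H := sin_mul_cos_eq (π*k/m) (j-1)
    have e1 : 2*(((j-1:ℕ):ℝ)+1)*(π*k/m) = 2*π*j*k/m := by
      rw [Nat.cast_sub hj1]
      push_cast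
      ring
    rw [e1] at H
    have e2 : ∀ l ∈ Finset.range (j-1), Real.cos (2*((l:ℝ)+1)*(π*k/m)) = Real.cos (2*π*((l:ℝ)+1)*k/m) := by
      intro l _
      congr 1
      ring
    rw [Finset.sum_congr rfl e2] at H
    rw [Real.cot_eq_cos_div_sin]
    rw [div_mul_eq_mul_div, div_eq_iff hs]
    linear_combination H
  rw [Finset.sum_congr rfl point]
  have split : ∑ k ∈ Finset.Icc 1 (m-1), (1 + Real.cos (2*π*j*k/m)
        + 2*∑ l ∈ Finset.range (j-1), Real.cos (2*π*((l:ℝ)+1)*k/m))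
      = (∑ _k ∈ Finset.Icc 1 (m-1), (1:ℝ))
        + (∑ k ∈ Finset.Icc 1 (m-1), Real.cos (2*π*j*k/m))
        + 2 * ∑ l ∈ Finset.range (j-1), ∑ k ∈ Finset.Icc 1 (m-1), Real.cos (2*π*((l:ℝ)+1)*k/m) := by
    rw [Finset.sum_add_distrib, Finset.sum_add_distrib, ← Finset.mul_sum, Finset.sum_comm]
  rw [split]
  have h1 : (∑ _k ∈ Finset.Icc 1 (m-1), (1:ℝ)) = (m:ℝ) - 1 := by
    rw [Finset.sum_const, Nat.card_Icc]
    have : m - 1 + 1 - 1 = m - 1 := by omega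
    rw [this, nsmul_eq_mul, mul_one, Nat.cast_sub (by omega)]
    norm_num
  have h2 : (∑ k ∈ Finset.Icc 1 (m-1), Real.cos (2*π*j*k/m)) = -1 := cos_sum_Icc m j hj1 hj2
  have h3 : ∑ l ∈ Finset.range (j-1), ∑ k ∈ Finset.Icc 1 (m-1), Real.cos (2*π*((l:ℝ)+1)*k/m)
      = -((j:ℝ) - 1) := by
    have inner : ∀ l ∈ Finset.range (j-1),
        ∑ k ∈ Finset.Icc 1 (m-1), Real.cos (2*π*((l:ℝ)+1)*k/m) = -1 := by
      intro l hl
      simp only [Finset.mem_range] at hl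
      have := cos_sum_Icc m (l+1) (by omega) (by omega)
      rw [← this]
      apply Finset.sum_congr rfl
      intro k _
      congr 2
      push_cast
      ring
    rw [Finset.sum_congr rfl inner, Finset.sum_const, nsmul_eq_mul, Finset.card_range]
    rw [Nat.cast_sub hj1]
    push_cast
    ring
  rw [h1, h2, h3]
  ring

lemma cot_add_nat_mul_pi (x : ℝ) (q : ℕ) : Real.cot (x + q * π) = Real.cot x := by
  rw [Real.cot_eq_cos_div_sin, Real.cot_eq_cos_div_sin]
  have hs := Real.sin_add_int_mul_pi x (q : ℤ)
  have hc := Real.cos_add_int_mul_pi x (q : ℤ)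
  push_cast at hs hc
  rw [hs, hc, mul_div_mul_left _ _ (by positivity : ((-1:ℝ))^(q:ℤ) ≠ 0)]

lemma cot_mul_sin_sq (x : ℝ) : Real.cot x * Real.sin x ^ 2 = Real.sin x * Real.cos x := by
  rw [Real.cot_eq_cos_div_sin]
  rcases eq_or_ne (Real.sin x) 0 with h | h
  · simp [h]
  · field_simp

lemma fsTerm_key (m b c : ℕ) (hm : 2 ≤ m) (hc1 : 1 ≤ c) (hc2 : c < m)
    (hbc : (b * c) % m = 1) :
    ∑ k ∈ Finset.Icc 1 (m-1), Real.cot (π*k*b/m) * Real.cot (π*k/m) * Real.sin (π*k/m)^2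
      = ((m:ℝ) - 2*c)/2 := by
  have hm0 : 0 < m := by omega
  have hmR : (0:ℝ) < m := by exact_mod_cast hm0
  have hmR' : (m:ℝ) ≠ 0 := ne_of_gt hmR
  -- mod arithmetic helper
  have modfact : ∀ k, k < m → ((k*b) % m * c) % m = k := by
    intro k hk
    rw [Nat.mod_mul_mod, mul_assoc, Nat.mul_mod k (b*c) m, hbc, mul_one, Nat.mod_mod_of_dvd,
      Nat.mod_eq_of_lt hk]
    exact dvd_rfl
  have modfact' : ∀ k, k < m → ((k*c) % m * b) % m = k := by
    intro k hk
    rw [Nat.mod_mul_mod, mul_assoc, Nat.mul_mod k (c*b) m, mul_comm c b, hbc, mul_one,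
      Nat.mod_mod_of_dvd, Nat.mod_eq_of_lt hk]
    exact dvd_rfl
  -- pointwise rewrite
  have point : ∀ k ∈ Finset.Icc 1 (m-1),
      Real.cot (π*k*b/m) * Real.cot (π*k/m) * Real.sin (π*k/m)^2
        = Real.cot (π*(((k*b) % m : ℕ):ℝ)/m) * Real.sin (2*π*k/m) / 2 := by
    intro k hk
    have hdm : ((k*b : ℕ):ℝ) = (m:ℝ)*((k*b/m : ℕ):ℝ) + (((k*b) % m : ℕ):ℝ) := by
      exact_mod_cast (Nat.div_add_mod (k*b) m).symm
    have harg : π*(k:ℝ)*b/m = π*(((k*b) % m : ℕ):ℝ)/m + ((k*b/m : ℕ):ℝ)*π := by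
      push_cast at hdm ⊢
      field_simp
      linear_combination hdm
    rw [harg, cot_add_nat_mul_pi]
    rw [mul_assoc, cot_mul_sin_sq]
    rw [show 2*π*(k:ℝ)/m = 2*(π*k/m) by ring, Real.sin_two_mul]
    ring
  rw [Finset.sum_congr rfl point]
  -- reindex k ↦ (k*b) % m
  have reindex : ∑ k ∈ Finset.Icc 1 (m-1), Real.cot (π*(((k*b) % m : ℕ):ℝ)/m) * Real.sin (2*π*k/m) / 2
      = ∑ r ∈ Finset.Icc 1 (m-1), Real.cot (π*r/m) * Real.sin (2*π*(((r*c) % m : ℕ):ℝ)/m) / 2 := by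
    apply Finset.sum_nbij' (fun k => (k*b) % m) (fun r => (r*c) % m)
    · intro k hk
      simp only [Finset.mem_Icc] at hk ⊢
      have hlt : (k*b) % m < m := Nat.mod_lt _ hm0
      have hne : (k*b) % m ≠ 0 := by
        intro h0
        have := modfact k (by omega)
        rw [h0] at this
        simp at this
        omega
      omega
    · intro r hr
      simp only [Finset.mem_Icc] at hr ⊢
      have hlt : (r*c) % m < m := Nat.mod_lt _ hm0
      have hne : (r*c) % m ≠ 0 := by
        intro h0
        have := modfact' r (by omega)
        rw [h0] at this
        simp at this
        omega
      omega
    · intro k hk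
      simp only [Finset.mem_Icc] at hk
      exact modfact k (by omega)
    · intro r hr
      simp only [Finset.mem_Icc] at hr
      exact modfact' r (by omega)
    · intro k hk
      simp only [Finset.mem_Icc] at hk
      rw [modfact k (by omega)]
  rw [reindex]
  -- remove the mod inside sin, and conclude with cot_sin_sum
  have point2 : ∀ r ∈ Finset.Icc 1 (m-1),
      Real.cot (π*r/m) * Real.sin (2*π*(((r*c) % m : ℕ):ℝ)/m) / 2
        = Real.cot (π*r/m) * Real.sin (2*π*c*r/m) / 2 := by
    intro r hr
    have hdm : (r:ℝ) * c = (m:ℝ)*((r*c/m : ℕ):ℝ) + (((r*c) % m : ℕ):ℝ) := by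
      exact_mod_cast (Nat.div_add_mod (r*c) m).symm
    have harg : 2*π*(((r*c) % m : ℕ):ℝ)/m
        = 2*π*(c:ℝ)*r/m + (((-(r*c/m : ℕ) : ℤ)):ℝ)*(2*π) := by
      have hz : (((-(r*c/m : ℕ) : ℤ)):ℝ) = -((r*c/m : ℕ):ℝ) := by
        simp only [Int.cast_neg, Int.cast_natCast]
      have ho : (((r*c) % m : ℕ):ℝ) = (r:ℝ)*c - (m:ℝ)*((r*c/m : ℕ):ℝ) := by
        linarith [hdm]
      rw [hz, ho]
      field_simp
      ring
    rw [harg, Real.sin_add_int_mul_two_pi]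
  rw [Finset.sum_congr rfl point2]
  have := cot_sin_sum m c hc1 hc2
  rw [← Finset.sum_div, this]

lemma fsTerm_eq (m B c : ℕ) (hm : 2 ≤ m) (hc1 : 1 ≤ c) (hc2 : c < m)
    (hbc : (B * c) % m = 1) :
    fsTerm ((m:ℝ) * (B:ℝ)) m = 1 - 2*(c:ℝ)/m := by
  have hmR : (0:ℝ) < m := by exact_mod_cast (by omega : 0 < m)
  have hm' : (m:ℝ) ≠ 0 := ne_of_gt hmR
  unfold fsTerm
  have point : ∀ k ∈ Finset.Icc 1 (m-1),
      Real.cot (π * k * ((m:ℝ)*(B:ℝ)) / (m:ℝ)^2) * Real.cot (π * k / m) * Real.sin (π * k / m) ^ 2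
        = Real.cot (π*k*B/m) * Real.cot (π*k/m) * Real.sin (π*k/m)^2 := by
    intro k _
    congr 2
    · congr 1
      field_simp
  rw [Finset.sum_congr rfl point, fsTerm_key m B c hm hc1 hc2 hbc]
  field_simp

/-- For `n ≥ 3` and pairwise coprime integers `a₁, …, aₙ` with `aᵢ ≥ 2`, the real number
`R(a₁,…,aₙ)` is an odd integer not smaller than `-1`: there is an integer `m ≥ 0` with
`R(a₁,…,aₙ) = 2m - 1`. -/
theorem stmt_15 (n : ℕ) (hn : 3 ≤ n) (a : Fin n → ℕ)
    (ha2 : ∀ i, 2 ≤ a i)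
    (hcop : ∀ i j, i ≠ j → Nat.Coprime (a i) (a j)) :
    ∃ m : ℕ, FSR n a = 2 * (m : ℝ) - 1 := by
  classical
  set AN : ℕ := ∏ j, a j with hAN
  set B : Fin n → ℕ := fun i => ∏ j ∈ Finset.univ.erase i, a j with hB
  have hsplit : ∀ i, AN = a i * B i := fun i =>
    (Finset.mul_prod_erase Finset.univ a (Finset.mem_univ i)).symm
  have hBpos : ∀ i, 1 ≤ B i := fun i =>
    Finset.one_le_prod' fun j _ => by have := ha2 j; omega
  have hANpos : 1 ≤ AN := Finset.one_le_prod' fun j _ => by have := ha2 j; omega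
  have hBcop : ∀ i, Nat.Coprime (B i) (a i) := by
    intro i
    apply Nat.Coprime.prod_left
    intro j hj
    exact hcop j i (Finset.ne_of_mem_erase hj)
  -- choose inverses
  have hex : ∀ i, ∃ c : ℕ, (B i * c) % a i = 1 ∧ 1 ≤ c ∧ c < a i := by
    intro i
    obtain ⟨c₀, -, hc₀⟩ := Nat.exists_mul_mod_eq_one_of_coprime (hBcop i) (by have := ha2 i; omega)
    refine ⟨c₀ % a i, ?_, ?_, Nat.mod_lt _ (by have := ha2 i; omega)⟩
    · rw [Nat.mul_mod, Nat.mod_mod_of_dvd _ dvd_rfl, ← Nat.mul_mod]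
      exact hc₀
    · rcases Nat.eq_zero_or_pos (c₀ % a i) with h0 | h0
      · exfalso
        have hdvd : a i ∣ c₀ := Nat.dvd_of_mod_eq_zero h0
        have h2 : (B i * c₀) % a i = 0 := Nat.mod_eq_zero_of_dvd (hdvd.mul_left (B i))
        omega
      · exact h0
  choose c hc1 hc2 hc3 using hex
  set S : ℕ := ∑ i, c i * B i with hS
  have hANz : (0:ℤ) < (AN:ℤ) := by exact_mod_cast hANpos
  have hdvd : ∀ i, (a i : ℤ) ∣ (S : ℤ) - 1 := by
    intro i
    have hSz : (S:ℤ) = ∑ j, (c j : ℤ) * (B j : ℤ) := by rw [hS]; push_cast; rfl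
    have h1 : (∑ j ∈ Finset.univ.erase i, (c j : ℤ) * (B j : ℤ)) + (c i : ℤ) * (B i : ℤ)
        = ∑ j, (c j : ℤ) * (B j : ℤ) := Finset.sum_erase_add _ _ (Finset.mem_univ i)
    have hdiag : (a i : ℤ) ∣ (c i : ℤ) * (B i : ℤ) - 1 := by
      refine ⟨((B i * c i) / a i : ℕ), ?_⟩
      have hq := Nat.div_add_mod (B i * c i) (a i)
      rw [hc1 i] at hq
      have hqz : ((B i : ℤ)) * (c i : ℤ) = (a i : ℤ) * ((B i * c i) / a i : ℕ) + 1 := by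
        exact_mod_cast hq.symm
      linear_combination hqz
    have hoff : ∀ j ∈ Finset.univ.erase i, (a i : ℤ) ∣ (c j : ℤ) * (B j : ℤ) := by
      intro j hj
      have hij : i ≠ j := (Finset.ne_of_mem_erase hj).symm
      have : a i ∣ B j := Finset.dvd_prod_of_mem a (Finset.mem_erase.mpr ⟨hij, Finset.mem_univ i⟩)
      exact Dvd.dvd.mul_left (Int.natCast_dvd_natCast.mpr this) _
    have : (S:ℤ) - 1 = (∑ j ∈ Finset.univ.erase i, (c j : ℤ) * (B j : ℤ))
        + ((c i : ℤ) * (B i : ℤ) - 1) := by rw [hSz, ← h1]; ring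
    rw [this]
    exact dvd_add (Finset.dvd_sum hoff) hdiag
  have hprod : ((AN:ℤ)) ∣ (S:ℤ) - 1 := by
    have hANz' : (AN:ℤ) = ∏ i, (a i : ℤ) := by rw [hAN]; push_cast; rfl
    rw [hANz']
    exact Fintype.prod_dvd_of_coprime
      (fun i j hij => Nat.isCoprime_iff_coprime.mpr (hcop i j hij)) hdvd
  obtain ⟨t, ht⟩ := hprod
  have hSge : 1 ≤ S := by
    have i0 : Fin n := ⟨0, by omega⟩
    have h1 : 1 ≤ c i0 * B i0 := Nat.one_le_iff_ne_zero.mpr (by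
      have := hc2 i0; have := hBpos i0; positivity)
    calc 1 ≤ c i0 * B i0 := h1
    _ ≤ S := by
      rw [hS]
      exact Finset.single_le_sum (f := fun j => c j * B j) (fun j _ => Nat.zero_le _)
        (Finset.mem_univ i0)
  have ht0 : 0 ≤ t := by
    have h1 : 0 ≤ (AN:ℤ) * t := by
      rw [← ht]
      have : (1:ℤ) ≤ (S:ℤ) := by exact_mod_cast hSge
      omega
    exact nonneg_of_mul_nonneg_right h1 hANz
  have hSlt : S < n * AN := by
    have hterm : ∀ i, c i * B i ≤ AN - 1 := by
      intro i
      have h1 : c i * B i ≤ (a i - 1) * B i :=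
        Nat.mul_le_mul_right _ (by have := hc3 i; omega)
      have h2 : (a i - 1) * B i = AN - B i := by
        rw [Nat.sub_mul, one_mul, ← hsplit i]
      have := hBpos i
      omega
    calc S ≤ ∑ _i : Fin n, (AN - 1) := Finset.sum_le_sum (fun i _ => hterm i)
    _ = n * (AN - 1) := by rw [Finset.sum_const, Finset.card_univ, Fintype.card_fin, smul_eq_mul]
    _ < n * AN := mul_lt_mul_of_pos_left (by omega : AN - 1 < AN) (by omega : 0 < n)
  have htlt : t < n := by
    have hSz : (S:ℤ) < (n:ℤ) * (AN:ℤ) := by exact_mod_cast hSlt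
    nlinarith [ht, hANz, hSz]
  refine ⟨n - 1 - t.toNat, ?_⟩
  have hANR : (0:ℝ) < (AN:ℝ) := by exact_mod_cast hANpos
  have hprodR : (∏ j, ((a j : ℕ):ℝ)) = (AN:ℝ) := by rw [hAN]; push_cast; rfl
  unfold FSR
  rw [hprodR]
  have hterm : ∀ i, fsTerm ((AN:ℝ)) (a i) = 1 - 2*((c i * B i : ℕ):ℝ)/(AN:ℝ) := by
    intro i
    have haiR : (0:ℝ) < (a i : ℝ) := by exact_mod_cast (by have := ha2 i; omega : 0 < a i)
    have hBiR : (0:ℝ) < (B i : ℝ) := by exact_mod_cast hBpos i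
    have h1 : ((AN:ℕ):ℝ) = ((a i : ℕ):ℝ) * ((B i : ℕ):ℝ) := by
      rw [hsplit i]; push_cast; rfl
    rw [h1, fsTerm_eq (a i) (B i) (c i) (ha2 i) (hc2 i) (hc3 i) (hc1 i)]
    push_cast
    field_simp
  rw [Finset.sum_congr rfl (fun i _ => hterm i), Finset.sum_sub_distrib,
    Finset.sum_const, Finset.card_univ, Fintype.card_fin, nsmul_eq_mul, mul_one]
  have hsumS : ∑ i, 2*((c i * B i : ℕ):ℝ)/(AN:ℝ) = 2*(S:ℝ)/(AN:ℝ) := by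
    rw [← Finset.sum_div, ← Finset.mul_sum]
    congr 2
    rw [hS]; push_cast; rfl
  rw [hsumS]
  have htR : (S:ℝ) - 1 = (AN:ℝ)*(t:ℝ) := by exact_mod_cast ht
  have hkey : 2/(AN:ℝ) - 2*(S:ℝ)/(AN:ℝ) = -2*(t:ℝ) := by
    field_simp
    linear_combination (-1:ℝ) * htR
  have hcast : ((n - 1 - t.toNat : ℕ):ℝ) = (n:ℝ) - 1 - (t:ℝ) := by
    have h1 : (t.toNat : ℤ) = t := Int.toNat_of_nonneg ht0
    have h2 : t.toNat ≤ n - 1 := by omega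
    have h3 : (1:ℕ) ≤ n := by omega
    have h4 : ((t.toNat : ℕ):ℝ) = ((t : ℤ):ℝ) := by exact_mod_cast h1
    rw [Nat.cast_sub h2, Nat.cast_sub h3, Nat.cast_one, h4]
  rw [hcast]
  linarith [hkey]
end
end
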